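/- Differential privacy as an unconditional per-entry PML constraint under product priors: For every ε ≥ 0, the mechanism p satisfies ε-differential privacy if and only if for every full-support product prior q(x) = Π_{j=1}^n q_j(x_j) on 𝒟^n, every i ∈ [n], every d ∈ 𝒟, and every y ∈ 𝒴: Σ_{x∈𝒟^n : x_i = d} p(x)(y) · Π_{j≠i} q_j(x_j) ≤ e^ε · Σ_{x∈𝒟^n} p(x)(y) · q(x). (The left-hand side is the conditional output probability given D_i = d and the right-hand side is e^ε times the output marginal, so the displayed inequality is the per-entry pointwise-maximal-leakage constraint ℓ(D_i → y) ≤ ε.) -/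

import Mathlib

open Finset

/-- A probability mass function on a finite type. -/
def IsPMF {α : Type*} [Fintype α] (p : α → ℝ) : Prop :=
  (∀ a, 0 ≤ p a) ∧ ∑ a, p a = 1

/-- A mechanism on databases: a conditional pmf from `𝒟^n` to `𝒴`. -/
def IsMechanism {𝒟 𝒴 : Type*} [Fintype 𝒴] {n : ℕ}
    (p : (Fin n → 𝒟) → 𝒴 → ℝ) : Prop :=
  ∀ x, (∀ y, 0 ≤ p x y) ∧ ∑ y, p x y = 1

/-- `ε`-differential privacy. -/
def DiffPrivate {𝒟 𝒴 : Type*} {n : ℕ} (p : (Fin n → 𝒟) → 𝒴 → ℝ) (ε : ℝ) : Prop :=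
  ∀ (x : Fin n → 𝒟) (i : Fin n) (d' : 𝒟) (y : 𝒴),
    p x y ≤ Real.exp ε * p (Function.update x i d') y

/-- `ε`-free-lunch privacy. -/
def FreeLunch {𝒟 𝒴 : Type*} {n : ℕ} (p : (Fin n → 𝒟) → 𝒴 → ℝ) (ε : ℝ) : Prop :=
  ∀ (x x' : Fin n → 𝒟) (y : 𝒴), p x y ≤ Real.exp ε * p x' y

/-- **Differential privacy as an unconditional per-entry PML constraint under product
priors.** The mechanism `p` satisfies `ε`-differential privacy iff for every full-support
product prior `q(x) = Π_j q_j(x_j)`, every coordinate `i`, every value `d`, and every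
outcome `y`, the conditional output probability given `D_i = d` is at most `e^ε` times
the output marginal: `Σ_{x : x_i = d} p(x)(y) · Π_{j≠i} q_j(x_j) ≤ e^ε · Σ_x p(x)(y) · q(x)`,
i.e. the per-entry PML constraint `ℓ(D_i → y) ≤ ε` holds. -/
theorem dp_iff_per_entry_pml_product_priors
    {𝒟 𝒴 : Type*} [Fintype 𝒟] [DecidableEq 𝒟] [Fintype 𝒴] [Nonempty 𝒴]
    (hD : 2 ≤ Fintype.card 𝒟) {n : ℕ} (hn : 1 ≤ n)
    (p : (Fin n → 𝒟) → 𝒴 → ℝ) (hp : IsMechanism p)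
    (ε : ℝ) (hε : 0 ≤ ε) :
    DiffPrivate p ε ↔
      ∀ qi : Fin n → 𝒟 → ℝ, (∀ i, IsPMF (qi i)) → (∀ i d, 0 < qi i d) →
        ∀ (i : Fin n) (d : 𝒟) (y : 𝒴),
          (∑ x ∈ Finset.univ.filter (fun x : Fin n → 𝒟 => x i = d),
              p x y * ∏ j ∈ Finset.univ.erase i, qi j (x j)) ≤
            Real.exp ε * ∑ x : Fin n → 𝒟, p x y * ∏ j, qi j (x j) := by
  classical
  constructor
  · -- forward: DP implies the PML constraint
    intro hdp qi hpmf hpos i d y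
    set P : (Fin n → 𝒟) → ℝ := fun x => ∏ j ∈ Finset.univ.erase i, qi j (x j) with hP
    have hqnn : ∀ j a, 0 ≤ qi j a := fun j a => (hpmf j).1 a
    have hPnn : ∀ x, 0 ≤ P x := fun x => Finset.prod_nonneg fun j _ => hqnn j (x j)
    set S : 𝒟 → ℝ := fun d'' =>
      ∑ x ∈ Finset.univ.filter (fun x : Fin n → 𝒟 => x i = d''), p x y * P x with hS
    have hPupd : ∀ (x : Fin n → 𝒟) (a : 𝒟), P (Function.update x i a) = P x := by
      intro x a
      refine Finset.prod_congr rfl fun j hj => ?_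
      rw [Function.update_of_ne (Finset.ne_of_mem_erase hj)]
    have key : ∀ d'' : 𝒟, S d ≤ Real.exp ε * S d'' := by
      intro d''
      have h1 : S d ≤ ∑ x ∈ Finset.univ.filter (fun x : Fin n → 𝒟 => x i = d),
          Real.exp ε * p (Function.update x i d'') y * P x := by
        refine Finset.sum_le_sum fun x _ => ?_
        exact mul_le_mul_of_nonneg_right (hdp x i d'' y) (hPnn x)
      have h2 : ∑ x ∈ Finset.univ.filter (fun x : Fin n → 𝒟 => x i = d),
          Real.exp ε * p (Function.update x i d'') y * P x = Real.exp ε * S d'' := by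
        rw [hS, Finset.mul_sum]
        refine Finset.sum_nbij' (fun x => Function.update x i d'')
          (fun z => Function.update z i d) ?_ ?_ ?_ ?_ ?_
        · intro x hx; simp
        · intro z hz; simp
        · intro x hx
          simp only [Finset.mem_filter, Finset.mem_univ, true_and] at hx
          show Function.update (Function.update x i d'') i d = x
          rw [Function.update_idem, ← hx, Function.update_eq_self]
        · intro z hz
          simp only [Finset.mem_filter, Finset.mem_univ, true_and] at hz
          show Function.update (Function.update z i d) i d'' = z
          rw [Function.update_idem, ← hz, Function.update_eq_self]
        · intro x hx
          rw [hPupd x d'']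
          ring
      exact h1.trans (le_of_eq h2)
    have decomp : ∑ x : Fin n → 𝒟, p x y * ∏ j, qi j (x j)
        = ∑ d'' : 𝒟, qi i d'' * S d'' := by
      rw [← Finset.sum_fiberwise_of_maps_to (g := fun x : Fin n → 𝒟 => x i)
        (fun x _ => Finset.mem_univ (x i)) (fun x => p x y * ∏ j, qi j (x j))]
      refine Finset.sum_congr rfl fun d'' _ => ?_
      rw [hS, Finset.mul_sum]
      refine Finset.sum_congr rfl fun x hx => ?_
      simp only [Finset.mem_filter, Finset.mem_univ, true_and] at hx
      rw [← Finset.mul_prod_erase Finset.univ (fun j => qi j (x j)) (Finset.mem_univ i), hx]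
      ring
    have hsum1 : ∑ d'' : 𝒟, qi i d'' = 1 := (hpmf i).2
    calc S d = ∑ d'' : 𝒟, qi i d'' * S d := by
          rw [← Finset.sum_mul, hsum1, one_mul]
      _ ≤ ∑ d'' : 𝒟, qi i d'' * (Real.exp ε * S d'') := by
          exact Finset.sum_le_sum fun d'' _ =>
            mul_le_mul_of_nonneg_left (key d'') (hqnn i d'')
      _ = Real.exp ε * ∑ x : Fin n → 𝒟, p x y * ∏ j, qi j (x j) := by
          rw [decomp, Finset.mul_sum]; exact Finset.sum_congr rfl fun d'' _ => by ring
  · -- backward: PML constraint for all product priors implies DP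
    intro h x i d' y
    have hpy : ∀ (z : Fin n → 𝒟) (y' : 𝒴), p z y' ≤ 1 := by
      intro z y'
      rw [← (hp z).2]
      exact Finset.single_le_sum (fun y'' _ => (hp z).1 y'') (Finset.mem_univ y')
    have hcard : (0 : ℝ) < Fintype.card 𝒟 := by
      have : 0 < Fintype.card 𝒟 := lt_of_lt_of_le (by norm_num) hD
      exact_mod_cast this
    refine le_of_forall_pos_le_add fun c hc => ?_
    set K : ℝ := n * (Real.exp ε + 1) + 1 with hK
    have hKpos : 0 < K := by positivity
    set δ : ℝ := min (1/2) (c / K) with hδ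
    have hδpos : 0 < δ := lt_min (by norm_num) (div_pos hc hKpos)
    have hδhalf : δ ≤ 1/2 := min_le_left _ _
    have hδ1 : δ ≤ 1 := hδhalf.trans (by norm_num)
    have hδcK : δ ≤ c / K := min_le_right _ _
    have hKge : (n : ℝ) * (Real.exp ε + 1) ≤ K := by rw [hK]; linarith
    clear_value K
    clear_value δ
    set t : Fin n → 𝒟 := Function.update x i d' with ht
    set qi : Fin n → 𝒟 → ℝ :=
      fun j a => (1 - δ) * (if a = t j then 1 else 0) + δ / Fintype.card 𝒟 with hqi
    have hqnn : ∀ j a, 0 ≤ qi j a := by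
      intro j a
      have h1 : 0 ≤ (1 - δ) * (if a = t j then 1 else 0) := by
        apply mul_nonneg (by linarith) (by positivity)
      have h2 : 0 ≤ δ / Fintype.card 𝒟 := le_of_lt (div_pos hδpos hcard)
      simp only [hqi]; linarith
    have hqpos : ∀ j a, 0 < qi j a := by
      intro j a
      have h1 : 0 ≤ (1 - δ) * (if a = t j then 1 else 0) := by
        apply mul_nonneg (by linarith) (by positivity)
      have h2 : 0 < δ / Fintype.card 𝒟 := div_pos hδpos hcard
      simp only [hqi]; linarith
    have hqle : ∀ j a, qi j a ≤ 1 := by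
      intro j a
      have h1 : (1 - δ) * (if a = t j then 1 else 0) ≤ 1 - δ := by
        rcases eq_or_ne a (t j) with rfl | hne
        · simp
        · simp [hne]; linarith
      have hcard1 : (1:ℝ) ≤ Fintype.card 𝒟 := by
        have : 1 ≤ Fintype.card 𝒟 := le_trans (by norm_num) hD
        exact_mod_cast this
      have h2 : δ / Fintype.card 𝒟 ≤ δ := div_le_self hδpos.le hcard1
      simp only [hqi]; linarith
    have hqt : ∀ j, 1 - δ ≤ qi j (t j) := by
      intro j
      have h2 : 0 < δ / Fintype.card 𝒟 := div_pos hδpos hcard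
      simp only [hqi, if_true, eq_self_iff_true, mul_one]; linarith
    have hpmf : ∀ j, IsPMF (qi j) := by
      intro j
      refine ⟨hqnn j, ?_⟩
      simp only [hqi]
      rw [Finset.sum_add_distrib, ← Finset.mul_sum, Finset.sum_ite_eq' Finset.univ (t j)
        (fun _ => (1:ℝ)), if_pos (Finset.mem_univ _), Finset.sum_const, Finset.card_univ,
        nsmul_eq_mul]
      field_simp
      ring
    have hbern : ∀ m : ℕ, 1 - n * δ ≤ (1 - δ) ^ m → True := fun _ _ => trivial
    -- (1 - δ)^m ≥ 1 - n δ for m ≤ n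
    have hpow : ∀ m : ℕ, m ≤ n → 1 - n * δ ≤ (1 - δ) ^ m := by
      intro m hm
      have h1 : 1 + (m : ℝ) * (-δ) ≤ (1 + (-δ)) ^ m := one_add_mul_le_pow (by linarith) m
      have h2 : (1 : ℝ) - n * δ ≤ 1 - m * δ := by
        have : (m : ℝ) ≤ n := by exact_mod_cast hm
        nlinarith [hδpos.le]
      calc (1 : ℝ) - n * δ ≤ 1 - m * δ := h2
        _ = 1 + m * (-δ) := by ring
        _ ≤ (1 + (-δ)) ^ m := h1
        _ = (1 - δ) ^ m := by ring_nf
    -- products at the target are large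
    have hprod_erase : 1 - n * δ ≤ ∏ j ∈ Finset.univ.erase i, qi j (x j) := by
      have heq : ∀ j ∈ Finset.univ.erase i, qi j (x j) = qi j (t j) := by
        intro j hj
        rw [ht, Function.update_of_ne (Finset.ne_of_mem_erase hj)]
      have h1 : (1 - δ) ^ (Finset.univ.erase i).card
          ≤ ∏ j ∈ Finset.univ.erase i, qi j (x j) := by
        rw [← Finset.prod_const]
        refine Finset.prod_le_prod (fun j _ => by linarith) fun j hj => ?_
        rw [heq j hj]; exact hqt j
      refine le_trans (hpow _ ?_) h1
      calc (Finset.univ.erase i).card ≤ Finset.univ.card := Finset.card_erase_le.trans le_rfl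
        _ = n := by simp
    have hprod_full : 1 - n * δ ≤ ∏ j, qi j (t j) := by
      have h1 : (1 - δ) ^ (Finset.univ : Finset (Fin n)).card ≤ ∏ j, qi j (t j) := by
        rw [← Finset.prod_const]
        exact Finset.prod_le_prod (fun j _ => by linarith) fun j _ => hqt j
      refine le_trans (hpow _ ?_) h1
      simp
    have hprod_le_one : ∀ z : Fin n → 𝒟, ∏ j, qi j (z j) ≤ 1 := fun z =>
      Finset.prod_le_one (fun j _ => hqnn j (z j)) (fun j _ => hqle j (z j))
    have hsum_prod : ∑ z : Fin n → 𝒟, ∏ j, qi j (z j) = 1 := by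
      rw [← Fintype.piFinset_univ, ← Finset.prod_univ_sum]
      exact Finset.prod_eq_one fun j _ => (hpmf j).2
    -- apply the hypothesis
    have H := h qi hpmf hqpos i (x i) y
    -- lower bound for the LHS
    have hLHS : p x y * (1 - n * δ) ≤
        ∑ z ∈ Finset.univ.filter (fun z : Fin n → 𝒟 => z i = x i),
          p z y * ∏ j ∈ Finset.univ.erase i, qi j (z j) := by
      have hxmem : x ∈ Finset.univ.filter (fun z : Fin n → 𝒟 => z i = x i) := by simp
      have h1 : p x y * (1 - n * δ) ≤ p x y * ∏ j ∈ Finset.univ.erase i, qi j (x j) :=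
        mul_le_mul_of_nonneg_left hprod_erase ((hp x).1 y)
      refine h1.trans (Finset.single_le_sum
        (f := fun z : Fin n → 𝒟 => p z y * ∏ j ∈ Finset.univ.erase i, qi j (z j))
        (fun z _ => mul_nonneg ((hp z).1 y)
          (Finset.prod_nonneg fun j _ => hqnn j (z j))) hxmem)
    -- upper bound for the RHS sum
    have hRHS : ∑ z : Fin n → 𝒟, p z y * ∏ j, qi j (z j) ≤ p t y + n * δ := by
      have hsplit : ∑ z : Fin n → 𝒟, p z y * ∏ j, qi j (z j)
          = p t y * ∏ j, qi j (t j)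
            + ∑ z ∈ Finset.univ.erase t, p z y * ∏ j, qi j (z j) :=
        (Finset.add_sum_erase Finset.univ _ (Finset.mem_univ t)).symm
      have h1 : p t y * ∏ j, qi j (t j) ≤ p t y :=
        mul_le_of_le_one_right ((hp t).1 y) (hprod_le_one t)
      have h2 : ∑ z ∈ Finset.univ.erase t, p z y * ∏ j, qi j (z j)
          ≤ ∑ z ∈ Finset.univ.erase t, ∏ j, qi j (z j) := by
        refine Finset.sum_le_sum fun z _ => ?_
        exact mul_le_of_le_one_left (Finset.prod_nonneg fun j _ => hqnn j (z j)) (hpy z y)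
      have h3 : ∑ z ∈ Finset.univ.erase t, ∏ j, qi j (z j)
          = 1 - ∏ j, qi j (t j) := by
        have := Finset.add_sum_erase Finset.univ (fun z : Fin n → 𝒟 => ∏ j, qi j (z j))
          (Finset.mem_univ t)
        rw [hsum_prod] at this
        linarith
      have h4 : ∑ z ∈ Finset.univ.erase t, ∏ j, qi j (z j) ≤ n * δ := by
        rw [h3]; linarith
      linarith
    -- combine
    have hcomb : p x y * (1 - n * δ) ≤ Real.exp ε * (p t y + n * δ) := by
      refine hLHS.trans (H.trans ?_)
      exact mul_le_mul_of_nonneg_left hRHS (Real.exp_pos ε).le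
    have hnδc : n * δ * (Real.exp ε + 1) ≤ c := by
      have h1 : δ ≤ c / K := hδcK
      have h2 : n * δ * (Real.exp ε + 1) ≤ (n * (Real.exp ε + 1)) * (c / K) := by
        have hnn : (0:ℝ) ≤ n * (Real.exp ε + 1) := by positivity
        nlinarith [h1, hδpos.le, Real.exp_pos ε]
      have h3 : (n * (Real.exp ε + 1)) * (c / K) ≤ K * (c / K) :=
        mul_le_mul_of_nonneg_right hKge (div_pos hc hKpos).le
      have h4 : K * (c / K) = c := mul_div_cancel₀ c hKpos.ne'
      linarith
    have hpxδ : p x y * (n * δ) ≤ n * δ := by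
      have : (0:ℝ) ≤ n * δ := by positivity
      nlinarith [(hp x).1 y, hpy x y]
    have : p x y ≤ Real.exp ε * p t y + n * δ * (Real.exp ε + 1) := by
      have e1 : Real.exp ε * (p t y + n * δ)
          = Real.exp ε * p t y + Real.exp ε * (n * δ) := by ring
      rw [e1] at hcomb
      have e2 : p x y * (1 - n * δ) = p x y - p x y * (n * δ) := by ring
      rw [e2] at hcomb
      linarith [hcomb, hpxδ]
    rw [ht] at this
    linarith
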